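/- Let v be a unit vector in ℂ^n (v†v = 1) all of whose entries lie in ℤ[1/2,i], and let p ∈ {0,…,n−1}. Then there exists an n×n matrix G that is a product of one- and two-level matrices of types X, K†, and i, such that G·v = e_p, where e_p is the p-th standard basis vector. -/

import Mathlib

open Matrix

noncomputable section

/-- The ring ℤ[i] of Gaussian integers, viewed as a subring of ℂ. -/
def Zi : Subring ℂ := Subring.closure {Complex.I}

/-- The ring ℤ[1/2, i]: the smallest subring of ℂ containing 1/2 and i. -/
def Dhi : Subring ℂ := Subring.closure {(1/2 : ℂ), Complex.I}

/-- The one-level matrix `z_{[j]}`: the n×n identity matrix with the (j,j) entry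
replaced by z. -/
def oneLevel (n : ℕ) (z : ℂ) (j : Fin n) : Matrix (Fin n) (Fin n) ℂ :=
  fun a b => if a = j ∧ b = j then z else if a = b then 1 else 0

/-- The two-level matrix `U_{[j,k]}`: the n×n identity matrix with the four entries
in rows and columns j, k replaced by the corresponding entries of the 2×2 matrix U. -/
def twoLevel (n : ℕ) (U : Matrix (Fin 2) (Fin 2) ℂ) (j k : Fin n) :
    Matrix (Fin n) (Fin n) ℂ :=
  fun a b =>
    if a = j then (if b = j then U 0 0 else if b = k then U 0 1 else 0)
    else if a = k then (if b = j then U 1 0 else if b = k then U 1 1 else 0)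
    else if a = b then 1 else 0

/-- The 2×2 matrix X. -/
def Xmat : Matrix (Fin 2) (Fin 2) ℂ := !![0, 1; 1, 0]

/-- The 2×2 matrix K = (1/(1+i))·[[1,1],[1,−1]]. -/
def Kmat : Matrix (Fin 2) (Fin 2) ℂ := (1 / (1 + Complex.I)) • !![1, 1; 1, -1]

/-- The conjugate transpose K† of K. -/
def Kdag : Matrix (Fin 2) (Fin 2) ℂ := Kmatᴴ

/-- The least denominator exponent of t: the least k with γ^k·t ∈ ℤ[i],
where γ = 1 + i. -/
def lde (t : ℂ) : ℕ := sInf {k : ℕ | (1 + Complex.I) ^ k * t ∈ Zi}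

lemma I_mem_Zi : Complex.I ∈ Zi := Subring.subset_closure rfl

lemma int_pair_mem_Zi (a b : ℤ) : (a : ℂ) + b * Complex.I ∈ Zi :=
  add_mem (intCast_mem Zi a) (mul_mem (intCast_mem Zi b) I_mem_Zi)

lemma Zi_iff {z : ℂ} : z ∈ Zi ↔ ∃ a b : ℤ, z = (a : ℂ) + b * Complex.I := by
  constructor
  · intro hz
    induction hz using Subring.closure_induction with
    | mem x hx => exact ⟨0, 1, by simp [Set.mem_singleton_iff.mp hx]⟩
    | zero => exact ⟨0, 0, by simp⟩
    | one => exact ⟨1, 0, by simp⟩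
    | add x y hx hy ihx ihy =>
        obtain ⟨a, b, rfl⟩ := ihx; obtain ⟨c, d, rfl⟩ := ihy
        exact ⟨a + c, b + d, by push_cast; ring⟩
    | neg x hx ihx =>
        obtain ⟨a, b, rfl⟩ := ihx; exact ⟨-a, -b, by push_cast; ring⟩
    | mul x y hx hy ihx ihy =>
        obtain ⟨a, b, rfl⟩ := ihx; obtain ⟨c, d, rfl⟩ := ihy
        exact ⟨a*c - b*d, a*d + b*c, by push_cast; linear_combination (b*d : ℂ) * Complex.I_sq⟩
  · rintro ⟨a, b, rfl⟩; exact int_pair_mem_Zi a b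

lemma int_pair_eq {a b c d : ℤ} (h : (a : ℂ) + b * Complex.I = (c : ℂ) + d * Complex.I) :
    a = c ∧ b = d := by
  rw [Complex.ext_iff] at h
  simp at h
  exact ⟨by exact_mod_cast h.1, by exact_mod_cast h.2⟩

lemma gamma_mem_Zi : (1 + Complex.I) ∈ Zi := add_mem Zi.one_mem I_mem_Zi

lemma conj_mul_int (a b : ℤ) :
    (starRingEnd ℂ) ((a : ℂ) + b * Complex.I) * ((a : ℂ) + b * Complex.I)
      = ((a^2 + b^2 : ℤ) : ℂ) := by
  simp only [map_add, _root_.map_mul, Complex.conj_I, map_intCast]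
  push_cast
  linear_combination (-(b:ℂ)^2) * Complex.I_sq

local notation "γ" => (1 + Complex.I)

lemma gamma_ne_zero : (1 + Complex.I) ≠ 0 := by
  intro h
  have := congrArg Complex.im h
  simp at this

/-- γ^k * x ∈ Zi ↔ γ^(k+1) * x is divisible by γ inside Zi -/
lemma gamma_level_iff (k : ℕ) (x : ℂ) :
    γ ^ k * x ∈ Zi ↔ ∃ z ∈ Zi, γ ^ (k+1) * x = γ * z := by
  constructor
  · intro h; exact ⟨γ ^ k * x, h, by ring⟩
  · rintro ⟨z, hz, he⟩
    have : γ ^ k * x = z := by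
      have h2 : γ * (γ ^ k * x) = γ * z := by rw [← he]; ring
      exact mul_left_cancel₀ gamma_ne_zero h2
    rw [this]; exact hz

lemma gdvd_iff_parity {a b : ℤ} :
    (∃ z ∈ Zi, (a : ℂ) + b * Complex.I = γ * z) ↔ 2 ∣ a + b := by
  constructor
  · rintro ⟨z, hz, he⟩
    obtain ⟨c, d, rfl⟩ := Zi_iff.mp hz
    have : (a : ℂ) + b * Complex.I = ((c - d : ℤ) : ℂ) + ((c + d : ℤ) : ℂ) * Complex.I := by
      rw [he]; push_cast; linear_combination (d:ℂ) * Complex.I_sq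
    obtain ⟨h1, h2⟩ := int_pair_eq this
    omega
  · intro h
    obtain ⟨e, he⟩ : ∃ e, a + b = 2 * e := h
    refine ⟨((e : ℂ)) + ((b - e : ℤ) : ℂ) * Complex.I, int_pair_mem_Zi _ _, ?_⟩
    have ha : (a : ℂ) = 2 * e - b := by
      have := congrArg (Int.cast : ℤ → ℂ) he
      push_cast at this
      linear_combination this
    push_cast
    rw [ha]
    linear_combination ((e:ℂ) - b) * Complex.I_sq


lemma gamma_pow_mono {k m : ℕ} (hkm : k ≤ m) {z : ℂ} (h : γ ^ k * z ∈ Zi) :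
    γ ^ m * z ∈ Zi := by
  have : γ ^ m * z = γ ^ (m - k) * (γ ^ k * z) := by
    rw [← mul_assoc, ← pow_add]
    congr 2
    omega
  rw [this]
  exact mul_mem (pow_mem gamma_mem_Zi _) h

lemma dhi_lde {z : ℂ} (hz : z ∈ Dhi) : ∃ k, γ ^ k * z ∈ Zi := by
  induction hz using Subring.closure_induction with
  | mem x hx =>
      rcases hx with h | h
      · refine ⟨2, ?_⟩
        rw [h]
        have : γ ^ 2 * (1/2 : ℂ) = Complex.I := by
          have h2 : γ ^ 2 = 2 * Complex.I := by
            linear_combination Complex.I_sq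
          rw [h2]; ring
        rw [this]; exact I_mem_Zi
      · exact ⟨0, by simp [Set.mem_singleton_iff.mp h]; exact I_mem_Zi⟩
  | zero => exact ⟨0, by simpa using Zi.zero_mem⟩
  | one => exact ⟨0, by simpa using Zi.one_mem⟩
  | add x y hx hy ihx ihy =>
      obtain ⟨k1, h1⟩ := ihx; obtain ⟨k2, h2⟩ := ihy
      refine ⟨max k1 k2, ?_⟩
      have := add_mem (gamma_pow_mono (le_max_left k1 k2) h1)
        (gamma_pow_mono (le_max_right k1 k2) h2)
      simpa [mul_add] using this
  | neg x hx ihx =>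
      obtain ⟨k, h⟩ := ihx
      exact ⟨k, by simpa [mul_neg] using neg_mem h⟩
  | mul x y hx hy ihx ihy =>
      obtain ⟨k1, h1⟩ := ihx; obtain ⟨k2, h2⟩ := ihy
      refine ⟨k1 + k2, ?_⟩
      have := mul_mem h1 h2
      have he : γ ^ (k1 + k2) * (x * y) = γ ^ k1 * x * (γ ^ k2 * y) := by
        rw [pow_add]; ring
      rw [he]; exact this




lemma mulVec_oneLevel {n : ℕ} (z : ℂ) (j : Fin n) (v : Fin n → ℂ) :
    (oneLevel n z j).mulVec v = Function.update v j (z * v j) := by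
  funext a
  simp only [Matrix.mulVec, dotProduct, oneLevel, Function.update_apply]
  rcases eq_or_ne a j with rfl | h
  · rw [Finset.sum_eq_single a]
    · simp
    · intro b _ hb
      simp [hb, Ne.symm hb]
    · simp
  · rw [Finset.sum_eq_single a]
    · simp [h]
    · intro b _ hb
      simp [hb, Ne.symm hb, h]
    · simp

lemma mulVec_twoLevel {n : ℕ} (U : Matrix (Fin 2) (Fin 2) ℂ) (j k : Fin n)
    (hjk : j ≠ k) (v : Fin n → ℂ) :
    (twoLevel n U j k).mulVec v =
      Function.update (Function.update v j (U 0 0 * v j + U 0 1 * v k)) k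
        (U 1 0 * v j + U 1 1 * v k) := by
  funext a
  simp only [Matrix.mulVec, dotProduct, twoLevel, Function.update_apply]
  rcases eq_or_ne a j with rfl | haj
  · rw [Finset.sum_eq_add_of_mem a k (Finset.mem_univ _) (Finset.mem_univ _) hjk]
    · simp [hjk, Ne.symm hjk]
    · intro c _ hc
      simp [hc.1, hc.2]
  · rcases eq_or_ne a k with rfl | hak
    · rw [Finset.sum_eq_add_of_mem j a (Finset.mem_univ _) (Finset.mem_univ _) hjk]
      · simp [haj, Ne.symm haj, hjk, Ne.symm hjk]
      · intro c _ hc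
        simp [hc.1, hc.2, haj]
    · rw [Finset.sum_eq_single a]
      · simp [haj, hak]
      · intro b _ hb
        simp [haj, hak, hb, Ne.symm hb]
      · simp

lemma Kdag_apply (i j : Fin 2) :
    Kdag i j = (1 + Complex.I)/2 * (if i = 1 ∧ j = 1 then -1 else 1) := by
  have hinv : ((1:ℂ) + -Complex.I)⁻¹ = (1 + Complex.I)/2 := by
    refine inv_eq_of_mul_eq_one_right ?_
    rw [mul_comm, div_mul_eq_mul_div, div_eq_iff (two_ne_zero : (2:ℂ) ≠ 0)]
    linear_combination (-1 : ℂ) * Complex.I_sq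
  fin_cases i <;> fin_cases j <;>
    simp [Kdag, Kmat, Matrix.conjTranspose_apply, Complex.conj_I] <;> rw [hinv] <;> try ring

lemma Xmat00 : Xmat 0 0 = 0 := rfl
lemma Xmat01 : Xmat 0 1 = 1 := rfl
lemma Xmat10 : Xmat 1 0 = 1 := rfl
lemma Xmat11 : Xmat 1 1 = 0 := rfl

def normSum {n : ℕ} (v : Fin n → ℂ) : ℂ := ∑ j, (starRingEnd ℂ) (v j) * v j

lemma normSum_update {n : ℕ} (v : Fin n → ℂ) (j : Fin n) (a : ℂ) :
    normSum (Function.update v j a)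
      = normSum v - (starRingEnd ℂ) (v j) * v j + (starRingEnd ℂ) a * a := by
  unfold normSum
  have h1 : ∀ x, (starRingEnd ℂ) (Function.update v j a x) * Function.update v j a x
      = Function.update (fun y => (starRingEnd ℂ) (v y) * v y) j ((starRingEnd ℂ) a * a) x := by
    intro x
    rcases eq_or_ne x j with rfl | h
    · simp
    · simp [Function.update_apply, h]
  rw [Finset.sum_congr rfl (fun x _ => h1 x)]
  rw [Finset.sum_update_of_mem (Finset.mem_univ j)]
  rw [← Finset.add_sum_erase Finset.univ _ (Finset.mem_univ j)]
  have : Finset.univ \ {j} = Finset.univ.erase j := by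
    ext; simp [Finset.mem_erase, and_comm]
  rw [this]
  ring

def gateSet (n : ℕ) : Set (Matrix (Fin n) (Fin n) ℂ) :=
  {M : Matrix (Fin n) (Fin n) ℂ |
    (∃ j, M = oneLevel n Complex.I j) ∨
    (∃ j k, j < k ∧ M = twoLevel n Xmat j k) ∨
    (∃ j k, j < k ∧ M = twoLevel n Kdag j k)}

def Reach (n : ℕ) (v : Fin n → ℂ) (p : Fin n) : Prop :=
  ∃ G ∈ Submonoid.closure (gateSet n), G.mulVec v = Pi.single p 1

lemma mem_i {n : ℕ} (j : Fin n) : oneLevel n Complex.I j ∈ Submonoid.closure (gateSet n) :=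
  Submonoid.subset_closure (Or.inl ⟨j, rfl⟩)

lemma mem_X {n : ℕ} {j k : Fin n} (h : j < k) :
    twoLevel n Xmat j k ∈ Submonoid.closure (gateSet n) :=
  Submonoid.subset_closure (Or.inr (Or.inl ⟨j, k, h, rfl⟩))

lemma mem_K {n : ℕ} {j k : Fin n} (h : j < k) :
    twoLevel n Kdag j k ∈ Submonoid.closure (gateSet n) :=
  Submonoid.subset_closure (Or.inr (Or.inr ⟨j, k, h, rfl⟩))

lemma step_combine {n : ℕ} {v : Fin n → ℂ} {p : Fin n}
    (M : Matrix (Fin n) (Fin n) ℂ) (hM : M ∈ Submonoid.closure (gateSet n))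
    (h : Reach n (M.mulVec v) p) : Reach n v p := by
  obtain ⟨G, hG, hGe⟩ := h
  exact ⟨G * M, mul_mem hG hM, by rw [← Matrix.mulVec_mulVec]; exact hGe⟩

lemma Kdag_norm (u w : ℂ) :
    (starRingEnd ℂ) ((1 + Complex.I)/2 * (u + w)) * ((1 + Complex.I)/2 * (u + w))
      + (starRingEnd ℂ) ((1 + Complex.I)/2 * (u - w)) * ((1 + Complex.I)/2 * (u - w))
      = (starRingEnd ℂ) u * u + (starRingEnd ℂ) w * w := by
  simp only [_root_.map_mul, map_add, map_sub, map_div₀, _root_.map_one, Complex.conj_I,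
    map_ofNat]
  set cu := (starRingEnd ℂ) u
  set cw := (starRingEnd ℂ) w
  field_simp
  ring_nf
  linear_combination (-2 * (cu * u + cw * w)) * Complex.I_sq

lemma half_mem {U T : ℂ} {a b c d : ℤ} (hU : U = (a:ℂ) + b * Complex.I)
    (hT : T = (c:ℂ) + d * Complex.I) (h1 : 2 ∣ a + c) (h2 : 2 ∣ b + d) :
    (U + T)/2 ∈ Zi := by
  obtain ⟨e, he⟩ := h1
  obtain ⟨f, hf⟩ := h2
  have : (U + T)/2 = (e : ℂ) + (f : ℂ) * Complex.I := by
    rw [hU, hT, div_eq_iff (two_ne_zero : (2:ℂ) ≠ 0)]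
    have he' : (a : ℂ) + c = 2 * e := by exact_mod_cast congrArg (Int.cast : ℤ → ℂ) he
    have hf' : (b : ℂ) + d = 2 * f := by exact_mod_cast congrArg (Int.cast : ℤ → ℂ) hf
    linear_combination he' + Complex.I * hf'
  rw [this]
  exact int_pair_mem_Zi e f

lemma matched {U T : ℂ} {a b c d : ℤ} (hU : U = (a:ℂ) + b * Complex.I)
    (hT : T = (c:ℂ) + d * Complex.I) (h1 : 2 ∣ a + c) (h2 : 2 ∣ b + d) :
    (U + T)/2 ∈ Zi ∧ (U - T)/2 ∈ Zi := by
  refine ⟨half_mem hU hT h1 h2, ?_⟩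
  have hT' : -T = ((-c : ℤ):ℂ) + (-d : ℤ) * Complex.I := by rw [hT]; push_cast; ring
  have := half_mem hU hT' (by omega) (by omega)
  simpa [sub_eq_add_neg] using this

/-- For U, T ∈ ℤ[i] both odd (not divisible by γ), some r ≤ 1 makes
(U + I^r T)/2 and (U - I^r T)/2 Gaussian integers. -/
lemma pair_core {U T : ℂ} (hU : U ∈ Zi) (hT : T ∈ Zi)
    (hoU : ¬ ∃ z ∈ Zi, U = (1 + Complex.I) * z)
    (hoT : ¬ ∃ z ∈ Zi, T = (1 + Complex.I) * z) :
    ∃ r : ℕ, r ≤ 1 ∧ (U + Complex.I ^ r * T)/2 ∈ Zi ∧ (U - Complex.I ^ r * T)/2 ∈ Zi := by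
  obtain ⟨a, b, hab⟩ := Zi_iff.mp hU
  obtain ⟨c, d, hcd⟩ := Zi_iff.mp hT
  have hoab : ¬ 2 ∣ a + b := fun h => hoU (hab ▸ gdvd_iff_parity.mpr h)
  have hocd : ¬ 2 ∣ c + d := fun h => hoT (hcd ▸ gdvd_iff_parity.mpr h)
  by_cases hcase : 2 ∣ a - c
  · refine ⟨0, le_refl _ |>.trans (by omega), ?_, ?_⟩ <;>
      [skip; skip]
    · have := matched hab hcd (by omega) (by omega)
      simpa using this.1
    · have := matched hab hcd (by omega) (by omega)
      simpa using this.2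
  · have hIT : Complex.I * T = ((-d : ℤ):ℂ) + (c : ℤ) * Complex.I := by
      rw [hcd]; push_cast; linear_combination (d:ℂ) * Complex.I_sq
    refine ⟨1, le_refl _, ?_, ?_⟩
    · have := matched hab hIT (by omega) (by omega)
      simpa using this.1
    · have := matched hab hIT (by omega) (by omega)
      simpa using this.2

lemma one_reach {n : ℕ} (j₀ p : Fin n) (v : Fin n → ℂ)
    (hv : v = fun x => if x = j₀ then 1 else 0) : Reach n v p := by
  rcases eq_or_ne j₀ p with rfl | hne
  · refine ⟨1, one_mem _, ?_⟩
    rw [Matrix.one_mulVec, hv]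
    funext x
    simp [Pi.single_apply]
  · have key : ∀ a b : Fin n, a < b → (a = j₀ ∧ b = p) ∨ (a = p ∧ b = j₀) →
        Reach n v p := by
      rintro a b hab hc
      refine step_combine _ (mem_X hab) ?_
      rw [mulVec_twoLevel _ _ _ (ne_of_lt hab), hv]
      refine ⟨1, one_mem _, ?_⟩
      rw [Matrix.one_mulVec]
      funext x
      have hab' : a ≠ b := ne_of_lt hab
      rcases hc with ⟨rfl, rfl⟩ | ⟨rfl, rfl⟩ <;>
      · simp only [Xmat00, Xmat01, Xmat10, Xmat11, Function.update_apply, Pi.single_apply]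
        rcases eq_or_ne x a with rfl | hxa <;> rcases eq_or_ne x b with rfl | hxb <;>
          simp_all <;> omega
    rcases lt_or_gt_of_ne hne with h | h
    · exact key j₀ p h (Or.inl ⟨rfl, rfl⟩)
    · exact key p j₀ h (Or.inr ⟨rfl, rfl⟩)

lemma istep {n : ℕ} (j₀ : Fin n) (c : ℂ) :
    (oneLevel n Complex.I j₀).mulVec (fun x => if x = j₀ then c else 0)
      = fun x => if x = j₀ then Complex.I * c else 0 := by
  rw [mulVec_oneLevel]
  funext x
  rcases eq_or_ne x j₀ with rfl | h
  · simp
  · simp [Function.update_apply, h]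

lemma indicator_reach {n : ℕ} (j₀ p : Fin n) (c : ℂ)
    (hc : c = 1 ∨ c = Complex.I ∨ c = -1 ∨ c = -Complex.I) (v : Fin n → ℂ)
    (hv : v = fun x => if x = j₀ then c else 0) : Reach n v p := by
  rcases hc with rfl | rfl | rfl | rfl
  · exact one_reach j₀ p v hv
  · refine step_combine _ (mem_i j₀) ?_
    rw [hv, istep]
    refine step_combine _ (mem_i j₀) ?_
    rw [istep]
    refine step_combine _ (mem_i j₀) ?_
    rw [istep]
    apply one_reach j₀ p
    have : Complex.I * (Complex.I * (Complex.I * Complex.I)) = 1 := by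
      linear_combination (Complex.I^2 - 1) * Complex.I_sq
    rw [this]
  · refine step_combine _ (mem_i j₀) ?_
    rw [hv, istep]
    refine step_combine _ (mem_i j₀) ?_
    rw [istep]
    apply one_reach j₀ p
    have : Complex.I * (Complex.I * (-1)) = 1 := by
      linear_combination (-1 : ℂ) * Complex.I_sq
    rw [this]
  · refine step_combine _ (mem_i j₀) ?_
    rw [hv, istep]
    apply one_reach j₀ p
    have : Complex.I * (-Complex.I) = 1 := by
      linear_combination (-1 : ℂ) * Complex.I_sq
    rw [this]

lemma base_case {n : ℕ} (v : Fin n → ℂ) (hv : ∀ j, v j ∈ Zi)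
    (hnorm : normSum v = 1) (p : Fin n) : Reach n v p := by
  have hcomp : ∀ j, ∃ a b : ℤ, v j = (a:ℂ) + b * Complex.I := fun j => Zi_iff.mp (hv j)
  choose A B hAB using hcomp
  have hsum : ∑ j, (A j ^ 2 + B j ^ 2) = 1 := by
    have h2 : normSum v = ((∑ j, (A j ^ 2 + B j ^ 2) : ℤ) : ℂ) := by
      unfold normSum
      rw [Int.cast_sum]
      refine Finset.sum_congr rfl fun j _ => ?_
      rw [hAB j, conj_mul_int]
    rw [hnorm] at h2
    exact_mod_cast h2.symm
  have hnonneg : ∀ j, 0 ≤ A j ^ 2 + B j ^ 2 := fun j => by positivity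
  have hex : ∃ j₀, A j₀ ^ 2 + B j₀ ^ 2 ≠ 0 := by
    by_contra h
    push_neg at h
    rw [Finset.sum_eq_zero (fun j _ => h j)] at hsum
    omega
  obtain ⟨j₀, hj₀⟩ := hex
  have hle : A j₀ ^ 2 + B j₀ ^ 2 ≤ 1 := by
    rw [← hsum]
    exact Finset.single_le_sum (fun j _ => hnonneg j) (Finset.mem_univ j₀)
  have h1 : A j₀ ^ 2 + B j₀ ^ 2 = 1 := by
    have := hnonneg j₀; omega
  have hz : ∀ j, j ≠ j₀ → A j ^ 2 + B j ^ 2 = 0 := by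
    intro j hj
    have herase : ∑ x ∈ Finset.univ.erase j₀, (A x ^ 2 + B x ^ 2) = 0 := by
      have h3 := Finset.add_sum_erase Finset.univ (fun x => A x ^ 2 + B x ^ 2)
        (Finset.mem_univ j₀)
      omega
    have := (Finset.sum_eq_zero_iff_of_nonneg (fun x _ => hnonneg x)).mp herase j
      (Finset.mem_erase.mpr ⟨hj, Finset.mem_univ j⟩)
    exact this
  have hvz : ∀ j, j ≠ j₀ → v j = 0 := by
    intro j hj
    have h0 := hz j hj
    have hA : A j = 0 := by nlinarith [sq_nonneg (A j), sq_nonneg (B j)]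
    have hB : B j = 0 := by nlinarith [sq_nonneg (A j), sq_nonneg (B j)]
    rw [hAB j, hA, hB]; simp
  have hcases : v j₀ = 1 ∨ v j₀ = Complex.I ∨ v j₀ = -1 ∨ v j₀ = -Complex.I := by
    have ha_lb : -1 ≤ A j₀ := by nlinarith [sq_nonneg (B j₀), sq_nonneg (A j₀ + 1)]
    have ha_ub : A j₀ ≤ 1 := by nlinarith [sq_nonneg (B j₀), sq_nonneg (A j₀ - 1)]
    have hb_lb : -1 ≤ B j₀ := by nlinarith [sq_nonneg (A j₀), sq_nonneg (B j₀ + 1)]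
    have hb_ub : B j₀ ≤ 1 := by nlinarith [sq_nonneg (A j₀), sq_nonneg (B j₀ - 1)]
    rw [hAB j₀]
    interval_cases (A j₀) <;> interval_cases (B j₀) <;> norm_num at h1 <;> norm_num
  have hvind : v = fun x => if x = j₀ then v j₀ else 0 := by
    funext x
    rcases eq_or_ne x j₀ with rfl | h
    · simp
    · simp [h, hvz x h]
  exact indicator_reach j₀ p (v j₀) hcases v hvind

open scoped Classical

lemma conj_gamma_mul : (starRingEnd ℂ) (1 + Complex.I) * (1 + Complex.I) = 2 := by
  rw [map_add, _root_.map_one, Complex.conj_I]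
  linear_combination (-1 : ℂ) * Complex.I_sq

lemma intCast_zmod_eq_of_dvd {a b : ℤ} (h : 2 ∣ a - b) : ((a : ZMod 2)) = b := by
  rw [ZMod.intCast_eq_intCast_iff]
  exact Int.ModEq.symm (Int.modEq_iff_dvd.mpr (by omega))

lemma odd_card_even {n : ℕ} (k : ℕ) (v : Fin n → ℂ)
    (hW : ∀ j, γ ^ (k+1) * v j ∈ Zi) (hnorm : normSum v = 1) :
    2 ∣ (Finset.univ.filter (fun j => γ ^ k * v j ∉ Zi)).card := by
  choose A B hAB using fun j => Zi_iff.mp (hW j)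
  have hterm : ∀ x : ℂ, (starRingEnd ℂ) (γ^(k+1) * x) * (γ^(k+1) * x)
      = 2^(k+1) * ((starRingEnd ℂ) x * x) := by
    intro x
    have h1 : (starRingEnd ℂ) (γ^(k+1) * x) * (γ^(k+1) * x)
        = ((starRingEnd ℂ) (1 + Complex.I) * (1 + Complex.I))^(k+1)
          * ((starRingEnd ℂ) x * x) := by
      rw [_root_.map_mul, map_pow, mul_pow]; ring
    rw [h1, conj_gamma_mul]
  have hsum : ∑ j, (A j ^ 2 + B j ^ 2) = 2^(k+1) := by
    have h2 : ((∑ j, (A j ^ 2 + B j ^ 2) : ℤ) : ℂ) = 2^(k+1) := by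
      rw [Int.cast_sum]
      calc ∑ j, ((A j ^ 2 + B j ^ 2 : ℤ) : ℂ)
          = ∑ j, (starRingEnd ℂ) (γ^(k+1) * v j) * (γ^(k+1) * v j) := by
            refine Finset.sum_congr rfl fun j _ => ?_
            rw [hAB j, conj_mul_int]
        _ = ∑ j, 2^(k+1) * ((starRingEnd ℂ) (v j) * v j) :=
            Finset.sum_congr rfl fun j _ => hterm (v j)
        _ = 2^(k+1) * normSum v := by rw [← Finset.mul_sum]; rfl
        _ = 2^(k+1) := by rw [hnorm, mul_one]
    exact_mod_cast h2
  have hodd : ∀ j, (γ ^ k * v j ∉ Zi) ↔ ¬ (2 ∣ A j + B j) := by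
    intro j
    rw [gamma_level_iff, hAB j, gdvd_iff_parity]
  rw [← ZMod.natCast_eq_zero_iff]
  have hc : (((Finset.univ.filter (fun j => γ ^ k * v j ∉ Zi)).card : ℕ) : ZMod 2)
      = ((∑ j, (A j ^ 2 + B j ^ 2) : ℤ) : ZMod 2) := by
    rw [Finset.card_filter, Nat.cast_sum, Int.cast_sum]
    refine Finset.sum_congr rfl fun j _ => ?_
    by_cases hj : γ ^ k * v j ∉ Zi
    · rw [if_pos hj]
      have hpar : ¬ (2 ∣ A j + B j) := (hodd j).mp hj
      have : ((A j ^ 2 + B j ^ 2 : ℤ) : ZMod 2) = ((1 : ℤ) : ZMod 2) :=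
        intCast_zmod_eq_of_dvd (by
          have h1 := Int.even_mul_succ_self (A j - 1)
          have h2 := Int.even_mul_succ_self (B j - 1)
          obtain ⟨x, hx⟩ := h1; obtain ⟨y, hy⟩ := h2
          have : A j ^ 2 + B j ^ 2 - 1 = (x + x) + (y + y) + (A j + B j) - 1 := by
            nlinarith [hx, hy]
          omega)
      rw [this]; simp
    · rw [if_neg hj]
      push_neg at hj
      have hpar : 2 ∣ A j + B j := by
        by_contra hcon
        exact ((hodd j).mpr hcon) hj
      have : ((A j ^ 2 + B j ^ 2 : ℤ) : ZMod 2) = ((0 : ℤ) : ZMod 2) :=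
        intCast_zmod_eq_of_dvd (by
          obtain ⟨x, hx⟩ := Int.even_mul_succ_self (A j - 1)
          obtain ⟨y, hy⟩ := Int.even_mul_succ_self (B j - 1)
          have : A j ^ 2 + B j ^ 2 - 0 = (x + x) + (y + y) + (A j + B j) := by
            nlinarith [hx, hy]
          omega)
      rw [this]; simp
  rw [hc, hsum]
  have : ((2^(k+1) : ℤ) : ZMod 2) = ((0 : ℤ) : ZMod 2) :=
    intCast_zmod_eq_of_dvd (by
      have : (2:ℤ) ∣ 2^(k+1) := dvd_pow_self 2 (Nat.succ_ne_zero k)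
      omega)
  rw [this]; simp

lemma Kdag00 : Kdag 0 0 = (1+Complex.I)/2 := by rw [Kdag_apply]; norm_num
lemma Kdag01 : Kdag 0 1 = (1+Complex.I)/2 := by rw [Kdag_apply]; norm_num
lemma Kdag10 : Kdag 1 0 = (1+Complex.I)/2 := by rw [Kdag_apply]; norm_num
lemma Kdag11 : Kdag 1 1 = -((1+Complex.I)/2) := by rw [Kdag_apply]; norm_num

lemma conj_Ipow_mul (r : ℕ) (c : ℂ) :
    (starRingEnd ℂ) (Complex.I ^ r * c) * (Complex.I ^ r * c)
      = (starRingEnd ℂ) c * c := by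
  rw [_root_.map_mul, map_pow, Complex.conj_I]
  have h1 : (-Complex.I) ^ r * (starRingEnd ℂ) c * (Complex.I ^ r * c)
      = ((-Complex.I) * Complex.I) ^ r * ((starRingEnd ℂ) c * c) := by
    rw [mul_pow]; ring
  have h2 : (-Complex.I) * Complex.I = 1 := by
    linear_combination (-1 : ℂ) * Complex.I_sq
  rw [h1, h2, one_pow, one_mul]

lemma key {n : ℕ} : ∀ (k : ℕ) (v : Fin n → ℂ), (∀ j, γ ^ k * v j ∈ Zi) →
    normSum v = 1 → ∀ p, Reach n v p := by
  intro k
  induction k with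
  | zero =>
      intro v hv hn p
      exact base_case v (fun j => by simpa using hv j) hn p
  | succ k IH =>
      suffices H : ∀ m : ℕ, ∀ v : Fin n → ℂ, (∀ j, γ ^ (k+1) * v j ∈ Zi) →
          normSum v = 1 →
          (Finset.univ.filter (fun j => γ ^ k * v j ∉ Zi)).card = m →
          ∀ p, Reach n v p by
        intro v hv hn p
        exact H _ v hv hn rfl p
      intro m
      induction m using Nat.strong_induction_on with
      | _ m IH2 =>
        intro v hv hn hcard p
        rcases Nat.eq_zero_or_pos m with rfl | hm
        · -- no odd entries: reduce the exponent
          have hall : ∀ j, γ ^ k * v j ∈ Zi := by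
            intro j
            by_contra hj
            have : j ∈ Finset.univ.filter (fun j => γ ^ k * v j ∉ Zi) :=
              Finset.mem_filter.mpr ⟨Finset.mem_univ j, hj⟩
            rw [Finset.card_eq_zero] at hcard
            simp [hcard] at this
          exact IH v hall hn p
        · -- at least one odd entry; then at least two
          have heven := odd_card_even k v hv hn
          rw [hcard] at heven
          have h2m : 1 < (Finset.univ.filter (fun j => γ ^ k * v j ∉ Zi)).card := by
            rw [hcard]; omega
          obtain ⟨x0, hx0, y0, hy0, hxy0⟩ := Finset.one_lt_card.mp h2m
          have hpair : ∃ x y : Fin n, x < y ∧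
              γ ^ k * v x ∉ Zi ∧ γ ^ k * v y ∉ Zi := by
            rcases lt_or_gt_of_ne hxy0 with h | h
            · exact ⟨x0, y0, h, (Finset.mem_filter.mp hx0).2, (Finset.mem_filter.mp hy0).2⟩
            · exact ⟨y0, x0, h, (Finset.mem_filter.mp hy0).2, (Finset.mem_filter.mp hx0).2⟩
          obtain ⟨x, y, hxy, hox, hoy⟩ := hpair
          have hxny : x ≠ y := ne_of_lt hxy
          have hoU : ¬ ∃ z ∈ Zi, γ ^ (k+1) * v x = (1 + Complex.I) * z :=
            fun h => hox ((gamma_level_iff k (v x)).mpr h)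
          have hoT : ¬ ∃ z ∈ Zi, γ ^ (k+1) * v y = (1 + Complex.I) * z :=
            fun h => hoy ((gamma_level_iff k (v y)).mpr h)
          obtain ⟨r, hr1, hplus, hminus⟩ := pair_core (hv x) (hv y) hoU hoT
          set v₁ := Function.update v y (Complex.I ^ r * v y) with hv₁def
          have hg1 : ∃ M ∈ Submonoid.closure (gateSet n), M.mulVec v = v₁ := by
            interval_cases r
            · exact ⟨1, one_mem _, by
                rw [Matrix.one_mulVec, hv₁def, pow_zero, one_mul,
                  Function.update_eq_self]⟩
            · exact ⟨oneLevel n Complex.I y, mem_i y, by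
                rw [mulVec_oneLevel, hv₁def, pow_one]⟩
          obtain ⟨M₁, hM₁, hM₁e⟩ := hg1
          refine step_combine M₁ hM₁ ?_
          rw [hM₁e]
          refine step_combine (twoLevel n Kdag x y) (mem_K hxy) ?_
          rw [mulVec_twoLevel _ _ _ hxny]
          have hv1x : v₁ x = v x := Function.update_of_ne hxny _ _
          have hv1y : v₁ y = Complex.I ^ r * v y := Function.update_self _ _ _
          set a : ℂ := Kdag 0 0 * v₁ x + Kdag 0 1 * v₁ y with hadef
          set b : ℂ := Kdag 1 0 * v₁ x + Kdag 1 1 * v₁ y with hbdef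
          have ha : a = (1+Complex.I)/2 * (v x + Complex.I ^ r * v y) := by
            rw [hadef, Kdag00, Kdag01, hv1x, hv1y]; ring
          have hb : b = (1+Complex.I)/2 * (v x - Complex.I ^ r * v y) := by
            rw [hbdef, Kdag10, Kdag11, hv1x, hv1y]; ring
          have hax : γ ^ k * a ∈ Zi := by
            have he : γ ^ k * a
                = (γ ^ (k+1) * v x + Complex.I ^ r * (γ ^ (k+1) * v y))/2 := by
              rw [ha, pow_succ]; ring
            rw [he]; exact hplus
          have hbx : γ ^ k * b ∈ Zi := by
            have he : γ ^ k * b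
                = (γ ^ (k+1) * v x - Complex.I ^ r * (γ ^ (k+1) * v y))/2 := by
              rw [hb, pow_succ]; ring
            rw [he]; exact hminus
          set v₂ := Function.update (Function.update v₁ x a) y b with hv₂def
          have hv2x : v₂ x = a := by
            rw [hv₂def, Function.update_of_ne hxny, Function.update_self]
          have hv2y : v₂ y = b := Function.update_self _ _ _
          have hv2o : ∀ j, j ≠ x → j ≠ y → v₂ j = v j := by
            intro j hjx hjy
            rw [hv₂def, Function.update_of_ne hjy, Function.update_of_ne hjx,
              hv₁def, Function.update_of_ne hjy]
          have hv2 : ∀ j, γ ^ (k+1) * v₂ j ∈ Zi := by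
            intro j
            rcases eq_or_ne j x with rfl | hjx
            · rw [hv2x]
              have he : γ ^ (k+1) * a = (1 + Complex.I) * (γ ^ k * a) := by
                rw [pow_succ]; ring
              rw [he]; exact mul_mem gamma_mem_Zi hax
            · rcases eq_or_ne j y with rfl | hjy
              · rw [hv2y]
                have he : γ ^ (k+1) * b = (1 + Complex.I) * (γ ^ k * b) := by
                  rw [pow_succ]; ring
                rw [he]; exact mul_mem gamma_mem_Zi hbx
              · rw [hv2o j hjx hjy]; exact hv j
          have hn1 : normSum v₁ = 1 := by
            rw [hv₁def, normSum_update, conj_Ipow_mul, hn]; ring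
          have hn2 : normSum v₂ = 1 := by
            rw [hv₂def, normSum_update, normSum_update]
            rw [Function.update_of_ne (Ne.symm hxny)]
            have ha' : a = (1+Complex.I)/2 * (v₁ x + v₁ y) := by
              rw [hv1x, hv1y, ha]
            have hb' : b = (1+Complex.I)/2 * (v₁ x - v₁ y) := by
              rw [hv1x, hv1y, hb]
            have hKn := Kdag_norm (v₁ x) (v₁ y)
            rw [← ha', ← hb'] at hKn
            rw [hn1] at *
            linear_combination hn1 + hKn
          have hsub : Finset.univ.filter (fun j => γ ^ k * v₂ j ∉ Zi)
              ⊂ Finset.univ.filter (fun j => γ ^ k * v j ∉ Zi) := by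
            constructor
            · intro j hj
              rw [Finset.mem_filter] at hj ⊢
              refine ⟨Finset.mem_univ j, ?_⟩
              rcases eq_or_ne j x with rfl | hjx
              · exact (hj.2 (hv2x ▸ hax)).elim
              · rcases eq_or_ne j y with rfl | hjy
                · exact (hj.2 (hv2y ▸ hbx)).elim
                · rw [← hv2o j hjx hjy]; exact hj.2
            · intro hcon
              have hxmem : x ∈ Finset.univ.filter (fun j => γ ^ k * v j ∉ Zi) :=
                Finset.mem_filter.mpr ⟨Finset.mem_univ x, hox⟩
              have := Finset.mem_filter.mp (hcon hxmem)
              exact this.2 (hv2x ▸ hax)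
          have hlt : (Finset.univ.filter (fun j => γ ^ k * v₂ j ∉ Zi)).card < m := by
            rw [← hcard]
            exact Finset.card_lt_card hsub
          exact IH2 _ hlt v₂ hv2 hn2 rfl p

/-- Column lemma: for a unit vector v with entries in ℤ[1/2,i] and any p,
there is a product G of one- and two-level matrices of types X, K†, and i with
G·v = e_p. -/
theorem stmt_7 (n : ℕ) (v : Fin n → ℂ) (hv : ∀ j, v j ∈ Dhi)
    (hunit : ∑ j, (starRingEnd ℂ) (v j) * v j = 1) (p : Fin n) :
    ∃ G ∈ Submonoid.closure {M : Matrix (Fin n) (Fin n) ℂ |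
        (∃ j, M = oneLevel n Complex.I j) ∨
        (∃ j k, j < k ∧ M = twoLevel n Xmat j k) ∨
        (∃ j k, j < k ∧ M = twoLevel n Kdag j k)},
      G.mulVec v = Pi.single p 1 := by
  choose f hf using fun j => dhi_lde (hv j)
  have hall : ∀ j, (1 + Complex.I) ^ (Finset.univ.sup f) * v j ∈ Zi := fun j =>
    gamma_pow_mono (Finset.le_sup (Finset.mem_univ j)) (hf j)
  exact key (Finset.univ.sup f) v hall hunit p

end
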